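/- (Pinching theorem.) Let N be a function from n×n complex matrices to the reals satisfying the norm axioms N(A + B) ≤ N(A) + N(B) and N(c • A) = |c| · N(A) for all complex scalars c, and which is unitarily similarity-invariant: N(U * A * Uᴴ) = N(A) for every unitary matrix U. Then for every n×n complex matrix A, N of the diagonal part of A is at most N(A): N(Matrix.diagonal (fun i => A i i)) ≤ N(A). -/

import Mathlib

open Matrix

/-- **Pinching theorem.** If `N` is a (semi)norm on `n×n` complex matrices that is
invariant under unitary similarity, then `N` of the diagonal part of `A` is at most
`N A`. -/
theorem stmt_2 {n : ℕ} (N : Matrix (Fin n) (Fin n) ℂ → ℝ)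
    (hadd : ∀ A B : Matrix (Fin n) (Fin n) ℂ, N (A + B) ≤ N A + N B)
    (hsmul : ∀ (c : ℂ) (A : Matrix (Fin n) (Fin n) ℂ), N (c • A) = ‖c‖ * N A)
    (hunit : ∀ (U A : Matrix (Fin n) (Fin n) ℂ), Uᴴ * U = 1 → N (U * A * Uᴴ) = N A)
    (A : Matrix (Fin n) (Fin n) ℂ) :
    N (Matrix.diagonal (fun i => A i i)) ≤ N A := by
  have hN0 : N 0 = 0 := by simpa using hsmul 0 0
  have hsum : ∀ (s : Finset ℕ) (f : ℕ → Matrix (Fin n) (Fin n) ℂ),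
      N (∑ k ∈ s, f k) ≤ ∑ k ∈ s, N (f k) := by
    intro s f
    induction s using Finset.induction with
    | empty => simp [hN0]
    | insert _ _ h ih =>
      rw [Finset.sum_insert h, Finset.sum_insert h]
      exact le_trans (hadd _ _) (by linarith)
  rcases Nat.eq_zero_or_pos n with hn | hn
  · subst hn
    exact le_of_eq (congrArg N (by ext i j; exact i.elim0))
  have hn0 : (n : ℂ) ≠ 0 := Nat.cast_ne_zero.mpr hn.ne'
  set ω : ℂ := Complex.exp (2 * Real.pi * Complex.I / n) with hωdef
  have hprim : IsPrimitiveRoot ω n := Complex.isPrimitiveRoot_exp n hn.ne'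
  have hstar : star ω * ω = 1 := by
    rw [hωdef, Complex.star_def, ← Complex.exp_conj, ← Complex.exp_add]
    have : (starRingEnd ℂ) (2 * Real.pi * Complex.I / n) = -(2 * Real.pi * Complex.I / n) := by
      simp [map_div₀, Complex.conj_I, _root_.map_mul, map_ofNat]
      ring
    rw [this, neg_add_cancel, Complex.exp_zero]
  set U : ℕ → Matrix (Fin n) (Fin n) ℂ :=
    fun k => Matrix.diagonal (fun i : Fin n => ω ^ (k * (i : ℕ))) with hUdef
  have hUnit : ∀ k, (U k)ᴴ * U k = 1 := by
    intro k
    ext i j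
    rw [hUdef, diagonal_conjTranspose, diagonal_mul_diagonal]
    rcases eq_or_ne i j with rfl | hij
    · rw [Matrix.diagonal_apply_eq, Pi.star_apply, star_pow, ← mul_pow, hstar, one_pow,
        Matrix.one_apply_eq]
    · rw [Matrix.diagonal_apply_ne _ hij, Matrix.one_apply_ne hij]
  have hkey : ∑ k ∈ Finset.range n, U k * A * (U k)ᴴ
      = (n : ℂ) • Matrix.diagonal (fun i => A i i) := by
    ext i j
    have hent : ∀ k, (U k * A * (U k)ᴴ) i j
        = (ω ^ (i : ℕ) * (star ω) ^ (j : ℕ)) ^ k * A i j := by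
      intro k
      rw [hUdef, diagonal_conjTranspose, mul_diagonal, diagonal_mul]
      simp only [Pi.star_apply, star_pow]
      rw [show k * (i : ℕ) = (i : ℕ) * k from mul_comm _ _,
        show k * (j : ℕ) = (j : ℕ) * k from mul_comm _ _,
        pow_mul, pow_mul, mul_pow]
      ring
    rw [Matrix.sum_apply]
    simp only [hent, ← Finset.sum_mul]
    rcases eq_or_ne i j with rfl | hij
    · have hc : ω ^ (i : ℕ) * (star ω) ^ (i : ℕ) = 1 := by
        rw [← mul_pow, mul_comm, hstar, one_pow]
      have hsc : ∑ x ∈ Finset.range n, (ω ^ (i : ℕ) * star ω ^ (i : ℕ)) ^ x = (n : ℂ) := by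
        simp only [hc, one_pow, Finset.sum_const, Finset.card_range, nsmul_eq_mul, mul_one]
      rw [hsc, Matrix.smul_apply, Matrix.diagonal_apply_eq, smul_eq_mul]
    · have hωn : ω ^ n = 1 := hprim.pow_eq_one
      have hcn : (ω ^ (i : ℕ) * (star ω) ^ (j : ℕ)) ^ n = 1 := by
        rw [mul_pow, ← pow_mul, ← pow_mul, mul_comm (i : ℕ) n, mul_comm (j : ℕ) n,
          pow_mul, pow_mul, hωn, ← star_pow, hωn]
        simp
      have hc1 : ω ^ (i : ℕ) * (star ω) ^ (j : ℕ) ≠ 1 := by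
        intro h
        have hinv : star ω = ω⁻¹ := eq_inv_of_mul_eq_one_left hstar
        rw [hinv, inv_pow] at h
        have hω0 : ω ≠ 0 := hprim.ne_zero hn.ne'
        have : ω ^ (i : ℕ) = ω ^ (j : ℕ) := by
          field_simp at h
          exact h
        exact hij (Fin.ext (hprim.pow_inj i.isLt j.isLt this))
      rw [geom_sum_eq hc1, hcn, sub_self, zero_div, zero_mul]
      simp [Matrix.smul_apply, Matrix.diagonal_apply_ne _ hij]
  have hd : Matrix.diagonal (fun i => A i i)
      = (n : ℂ)⁻¹ • ∑ k ∈ Finset.range n, U k * A * (U k)ᴴ := by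
    rw [hkey, smul_smul, inv_mul_cancel₀ hn0, one_smul]
  rw [hd, hsmul]
  have hle : N (∑ k ∈ Finset.range n, U k * A * (U k)ᴴ)
      ≤ ∑ k ∈ Finset.range n, N (U k * A * (U k)ᴴ) := hsum _ _
  have heach : ∀ k ∈ Finset.range n, N (U k * A * (U k)ᴴ) = N A := by
    intro k _
    exact hunit _ _ (hUnit k)
  rw [Finset.sum_congr rfl heach, Finset.sum_const, Finset.card_range, nsmul_eq_mul] at hle
  have hnorm : ‖((n : ℂ))⁻¹‖ = (n : ℝ)⁻¹ := by
    simp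
  rw [hnorm]
  calc (n : ℝ)⁻¹ * N (∑ k ∈ Finset.range n, U k * A * (U k)ᴴ)
      ≤ (n : ℝ)⁻¹ * ((n : ℝ) * N A) := by
        apply mul_le_mul_of_nonneg_left hle (by positivity)
    _ = N A := by
        field_simp
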